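/- Let A be a symmetric positive definite real 3×3 matrix, let ε > 0 and φ ∈ ℝ, and let S denote the unique positive semidefinite square root of φ²·I + 4ε·A. If Y is any symmetric positive definite real 3×3 matrix satisfying φ·Y + ε·Y² = A, then Y = (1/(2ε))·(−φ·I + S). In particular the quadratic matrix equation φ·X + ε·X² = A has exactly one positive definite solution. -/

import Mathlib

open Matrix

abbrev Mat := Matrix (Fin 3) (Fin 3) ℝ

lemma ifebm_key (A : Mat) (hA : A.PosDef) (ε : ℝ) (hε : 0 < ε) (φ : ℝ)
    (S : Mat) (hS : S.PosSemidef) (hS2 : S * S = φ ^ 2 • (1 : Mat) + (4 * ε) • A)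
    (Y : Mat) (hY : Y.PosDef) (hYeq : φ • Y + ε • (Y * Y) = A) :
    Y = (1 / (2 * ε)) • (-(φ • (1 : Mat)) + S) := by
  classical
  set T : Mat := φ • (1 : Mat) + (2 * ε) • Y with hTdef
  have hH : Y.IsHermitian := hY.1
  have hlp : ∀ i, 0 < hH.eigenvalues i := hY.eigenvalues_pos
  -- φ + ε λ i > 0
  have hkey : ∀ i, 0 < φ + ε * hH.eigenvalues i := by
    intro i
    set lam := hH.eigenvalues i with hlam
    set v : Fin 3 → ℝ := ⇑(hH.eigenvectorBasis i) with hv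
    have hv0 : v ≠ 0 := by simpa [hv] using hH.eigenvectorBasis.orthonormal.ne_zero i
    have hYv : Y *ᵥ v = lam • v := hH.mulVec_eigenvectorBasis i
    have hAv : A *ᵥ v = ((φ + ε * lam) * lam) • v := by
      rw [← hYeq, add_mulVec, smul_mulVec, smul_mulVec, hYv,
        ← mulVec_mulVec, hYv, mulVec_smul, hYv, smul_smul, smul_smul, smul_smul, ← add_smul]
      ring_nf
    have hpos : 0 < dotProduct (star v) (A *ᵥ v) := hA.dotProduct_mulVec_pos hv0
    rw [hAv, dotProduct_smul, smul_eq_mul] at hpos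
    have hvv : 0 < dotProduct (star v) v := by
      rcases lt_or_eq_of_le (dotProduct_star_self_nonneg v) with h | h
      · exact h
      · exact absurd (dotProduct_star_self_eq_zero.mp h.symm) hv0
    have h1 : 0 < (φ + ε * lam) * lam := by nlinarith
    nlinarith [hlp i]
  -- T is positive definite
  have hTH : T.IsHermitian := by
    have hYt : Yᵀ = Y := by simpa using hH.eq
    show Tᴴ = T
    simp [hTdef, conjTranspose_add, conjTranspose_smul, hYt]
  have hU := hH.spectral_theorem
  set U : Mat := (hH.eigenvectorUnitary : Mat) with hUdef
  have hUU : U * star U = 1 := Matrix.mem_unitaryGroup_iff.mp hH.eigenvectorUnitary.2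
  have hUU' : star U * U = 1 := Matrix.mem_unitaryGroup_iff'.mp hH.eigenvectorUnitary.2
  have hT_eq : T = U * diagonal (fun i => φ + 2 * ε * hH.eigenvalues i) * star U := by
    have hdiag : diagonal (fun i => φ + 2 * ε * hH.eigenvalues i)
        = φ • (1 : Mat) + (2 * ε) • diagonal hH.eigenvalues := by
      ext i j
      rcases eq_or_ne i j with rfl | h
      · simp [Matrix.one_apply]
      · simp [Matrix.diagonal_apply_ne _ h, Matrix.one_apply_ne h]
    have hY_eq : Y = U * diagonal hH.eigenvalues * star U := by
      simpa [Function.comp] using hU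
    rw [hdiag]
    conv_lhs => rw [hTdef, hY_eq]
    simp only [mul_add, add_mul, Matrix.mul_smul, Matrix.smul_mul, Matrix.mul_assoc,
      one_mul, mul_one, hUU]
  have hT : T.PosDef := by
    refine PosDef.of_dotProduct_mulVec_pos hTH fun x hx => ?_
    have hx' : star U *ᵥ x ≠ 0 := by
      intro h
      apply hx
      have := congrArg (U *ᵥ ·) h
      simpa [mulVec_mulVec, hUU] using this
    have hDpos : (diagonal (fun i => φ + 2 * ε * hH.eigenvalues i)).PosDef := by
      refine (posDef_diagonal_iff).mpr fun i => ?_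
      have := hkey i; have := hlp i; nlinarith
    have := hDpos.dotProduct_mulVec_pos hx'
    rw [hT_eq]
    calc 0 < dotProduct (star (star U *ᵥ x))
          ((diagonal fun i => φ + 2 * ε * hH.eigenvalues i) *ᵥ (star U *ᵥ x)) := this
      _ = dotProduct (star x)
          ((U * diagonal (fun i => φ + 2 * ε * hH.eigenvalues i) * star U) *ᵥ x) := by
        simp only [Matrix.star_eq_conjTranspose, star_mulVec, conjTranspose_conjTranspose,
          ← Matrix.mulVec_mulVec, Matrix.dotProduct_mulVec, Matrix.vecMul_vecMul,
          Matrix.mul_assoc]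
  -- T² = S²
  have hT2 : T ^ 2 = S ^ 2 := by
    have hexp : T * T = φ ^ 2 • (1 : Mat) + (4 * ε) • (φ • Y + ε • (Y * Y)) := by
      simp only [hTdef, mul_add, add_mul, Matrix.smul_mul, Matrix.mul_smul, smul_smul,
        smul_add, mul_one, one_mul]
      module
    rw [pow_two, pow_two, hexp, hYeq, hS2]
  have hTS : T = S := by
    open scoped MatrixOrder in
    exact (CFC.sq_eq_sq_iff T S hT.posSemidef.nonneg hS.nonneg).mp hT2
  have h2ε : (2 * ε) ≠ 0 := by positivity
  rw [← hTS, hTdef, neg_add_cancel_left, smul_smul, one_div, inv_mul_cancel₀ h2ε, one_smul]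

theorem ifebm_quadratic_unique (A : Mat) (hA : A.PosDef) (ε : ℝ) (hε : 0 < ε) (φ : ℝ)
    (S : Mat) (hS : S.PosSemidef) (hS2 : S * S = φ ^ 2 • (1 : Mat) + (4 * ε) • A)
    (Y : Mat) (hY : Y.PosDef) (hYeq : φ • Y + ε • (Y * Y) = A) :
    Y = (1 / (2 * ε)) • (-(φ • (1 : Mat)) + S) ∧
      ∃! X : Mat, X.PosDef ∧ φ • X + ε • (X * X) = A := by
  refine ⟨ifebm_key A hA ε hε φ S hS hS2 Y hY hYeq, Y, ⟨hY, hYeq⟩, fun X hX => ?_⟩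
  rw [ifebm_key A hA ε hε φ S hS hS2 X hX.1 hX.2, ifebm_key A hA ε hε φ S hS hS2 Y hY hYeq]
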